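/- Let q > 1 and m > −1 be real numbers. Suppose (μ_i)_{i≥0} is a sequence of complex numbers with Σ_{i=0}^{∞} |μ_i|² q^{i² + mi} < ∞ (which forces the power series f(z) = Σ_{i=0}^{∞} μ_i z^i to converge absolutely for every z ∈ ℂ). If f(q^k) = 0 for every integer k ≥ 0, then μ_i = 0 for all i. -/

import Mathlib

noncomputable section
open Finset Filter Polynomial


lemma prod_one_sub_ge (K : ℕ) (x : ℕ → ℝ) (h0 : ∀ j, 0 ≤ x j) (h1 : ∀ j, x j ≤ 1) :
    1 - ∑ j ∈ Finset.range K, x j ≤ ∏ j ∈ Finset.range K, (1 - x j) := by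
  induction K with
  | zero => simp
  | succ n ih =>
    rw [Finset.prod_range_succ, Finset.sum_range_succ]
    have hnn : (0:ℝ) ≤ ∏ j ∈ Finset.range n, (1 - x j) :=
      Finset.prod_nonneg (fun j _ => by linarith [h1 j])
    have hle : ∏ j ∈ Finset.range n, (1 - x j) ≤ 1 :=
      Finset.prod_le_one (fun j _ => by linarith [h1 j]) (fun j _ => by linarith [h0 j])
    nlinarith [h0 n, h1 n]

lemma summ_aux (q m : ℝ) (hq : 1 < q) (C : ℝ) (k : ℕ) :
    Summable fun i : ℕ => C * q ^ ((k:ℝ) * i - ((i:ℝ)^2 + m * i)/2) := by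
  have hq0 : 0 < q := lt_trans one_pos hq
  apply summable_of_ratio_norm_eventually_le (r := q ^ (-1:ℝ))
    (Real.rpow_lt_one_of_one_lt_of_neg hq (by norm_num))
  obtain ⟨N, hN⟩ := exists_nat_ge ((k:ℝ) + (1 + |m|)/2)
  filter_upwards [Filter.eventually_ge_atTop N] with i hi
  have hiN : (N:ℝ) ≤ i := Nat.cast_le.2 hi
  have key : (k:ℝ) * (i+1) - (((i:ℝ)+1)^2 + m * (i+1))/2
      ≤ -1 + ((k:ℝ) * i - ((i:ℝ)^2 + m * i)/2) := by
    have := abs_le.1 (le_refl |m|)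
    nlinarith [this.1, this.2]
  have h1 : q ^ ((k:ℝ) * ((i:ℝ)+1) - (((i:ℝ)+1)^2 + m * ((i:ℝ)+1))/2)
      ≤ q ^ (-1:ℝ) * q ^ ((k:ℝ) * i - ((i:ℝ)^2 + m * i)/2) := by
    rw [← Real.rpow_add hq0]
    exact Real.rpow_le_rpow_of_exponent_le hq.le key
  simp only [norm_mul, Real.norm_eq_abs, Real.abs_rpow_of_nonneg hq0.le, abs_of_pos hq0]
  push_cast
  calc |C| * q ^ ((k:ℝ) * ((i:ℝ)+1) - (((i:ℝ)+1)^2 + m * ((i:ℝ)+1))/2)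
      ≤ |C| * (q ^ (-1:ℝ) * q ^ ((k:ℝ) * i - ((i:ℝ)^2 + m * i)/2)) := by
        apply mul_le_mul_of_nonneg_left h1 (abs_nonneg C)
    _ = q ^ (-1:ℝ) * (|C| * q ^ ((k:ℝ) * i - ((i:ℝ)^2 + m * i)/2)) := by ring

lemma summ (q m : ℝ) (hq : 1 < q) (μ : ℕ → ℂ) (C : ℝ)
    (hb : ∀ i : ℕ, ‖μ i‖ ≤ C * q ^ (-(((i:ℝ)^2 + m * i)/2))) (k : ℕ) :
    Summable fun i : ℕ => μ i * ((q:ℂ)^k)^i := by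
  have hq0 : 0 < q := lt_trans one_pos hq
  apply Summable.of_norm_bounded (summ_aux q m hq C k)
  intro i
  have h1 : ‖((q:ℂ)^k)^i‖ = q ^ ((k:ℝ) * i) := by
    rw [norm_pow, norm_pow, Complex.norm_real, Real.norm_eq_abs, abs_of_pos hq0,
      ← pow_mul, ← Real.rpow_natCast q (k*i)]
    push_cast; ring_nf
  rw [norm_mul, h1]
  calc ‖μ i‖ * q ^ ((k:ℝ) * i) ≤ (C * q ^ (-(((i:ℝ)^2 + m * i)/2))) * q ^ ((k:ℝ) * i) := by
        apply mul_le_mul_of_nonneg_right (hb i) (Real.rpow_nonneg hq0.le _)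
    _ = C * q ^ ((k:ℝ) * i - ((i:ℝ)^2 + m * i)/2) := by
        rw [mul_assoc, ← Real.rpow_add hq0]; ring_nf

lemma key (q m : ℝ) (hq : 1 < q) (hm : -1 < m) (μ : ℕ → ℂ) (C : ℝ) (hC : 0 ≤ C)
    (hb : ∀ i : ℕ, ‖μ i‖ ≤ C * q ^ (-(((i:ℝ)^2 + m * i)/2)))
    (hzero : ∀ k : ℕ, ∑' i : ℕ, μ i * ((q : ℂ) ^ k) ^ i = 0) : μ 0 = 0 := by
  have hq0 : (0:ℝ) < q := lt_trans one_pos hq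
  have hm1 : (0:ℝ) < m + 1 := by linarith
  -- the factors
  set v : ℕ → ℝ := fun j => q ^ (-((j:ℝ)+1)) with hv
  have hv0 : ∀ j, 0 < v j := fun j => Real.rpow_pos_of_pos hq0 _
  have hv1 : ∀ j, v j < 1 := fun j =>
    Real.rpow_lt_one_of_one_lt_of_neg hq (by have := Nat.cast_nonneg (α := ℝ) j; linarith)
  set P : ℕ → Polynomial ℂ := fun K => ∏ j ∈ Finset.range K, (1 - Polynomial.C ((v j : ℝ) : ℂ) * Polynomial.X) with hP
  have hqi : ∀ i : ℕ, ((q:ℂ)^i) = (((q ^ ((i:ℝ)) : ℝ)) : ℂ) := by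
    intro i; rw [Real.rpow_natCast]; push_cast; ring
  have heval : ∀ K (x : ℂ), (P K).eval x = ∏ j ∈ Finset.range K, (1 - (v j : ℂ) * x) := by
    intro K x; simp [hP, Polynomial.eval_prod]
  -- evaluation at q^i for 1 ≤ i ≤ K is zero
  have heval0 : ∀ K i : ℕ, 1 ≤ i → i ≤ K → (P K).eval ((q:ℂ)^i) = 0 := by
    intro K i h1i hiK
    rw [heval]
    apply Finset.prod_eq_zero (i := i - 1) (Finset.mem_range.2 (by omega))
    have hr : v (i-1) * q ^ ((i:ℝ)) = 1 := by
      rw [hv]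
      show q ^ (-((↑(i-1):ℝ)+1)) * q ^ ((i:ℝ)) = 1
      rw [← Real.rpow_add hq0]
      have : -((↑(i-1):ℝ)+1) + (i:ℝ) = 0 := by
        rw [Nat.cast_sub h1i]; push_cast; ring
      rw [this, Real.rpow_zero]
    have : (v (i-1) : ℂ) * ((q:ℂ)^i) = 1 := by
      rw [hqi, ← Complex.ofReal_mul, hr, Complex.ofReal_one]
    rw [this]; ring
  -- Step A : the sum against the polynomial kernel vanishes
  have stepA : ∀ K : ℕ, ∑' i : ℕ, μ i * (P K).eval ((q:ℂ)^i) = 0 := by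
    intro K
    set N := (P K).natDegree + 1 with hN
    have hrepr : ∀ i : ℕ, μ i * (P K).eval ((q:ℂ)^i)
        = ∑ k ∈ Finset.range N, (P K).coeff k * (μ i * ((q:ℂ)^k)^i) := by
      intro i
      rw [Polynomial.eval_eq_sum_range, Finset.mul_sum]
      congr 1; ext k
      rw [← pow_mul, ← pow_mul, mul_comm i k]; ring
    calc ∑' i : ℕ, μ i * (P K).eval ((q:ℂ)^i)
        = ∑' i : ℕ, ∑ k ∈ Finset.range N, (P K).coeff k * (μ i * ((q:ℂ)^k)^i) :=
          tsum_congr hrepr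
      _ = ∑ k ∈ Finset.range N, ∑' i : ℕ, (P K).coeff k * (μ i * ((q:ℂ)^k)^i) :=
          Summable.tsum_finsetSum (fun k _ => ((summ q m hq μ C hb k).mul_left _))
      _ = 0 := by
          apply Finset.sum_eq_zero; intro k _
          rw [tsum_mul_left, hzero k, mul_zero]
  -- summability of the kernel-weighted series
  have hgsumm : ∀ K : ℕ, Summable fun i : ℕ => μ i * (P K).eval ((q:ℂ)^i) := by
    intro K
    set N := (P K).natDegree + 1 with hN
    have hrepr : ∀ i : ℕ, μ i * (P K).eval ((q:ℂ)^i)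
        = ∑ k ∈ Finset.range N, (P K).coeff k * (μ i * ((q:ℂ)^k)^i) := by
      intro i
      rw [Polynomial.eval_eq_sum_range, Finset.mul_sum]
      congr 1; ext k
      rw [← pow_mul, ← pow_mul, mul_comm i k]; ring
    have : Summable fun i : ℕ => ∑ k ∈ Finset.range N, (P K).coeff k * (μ i * ((q:ℂ)^k)^i) :=
      summable_sum (fun k _ => ((summ q m hq μ C hb k).mul_left _))
    exact this.congr (fun i => (hrepr i).symm)
  -- geometric ratio
  set r : ℝ := q ^ (-(m+1)/2) with hrdef
  have hr0 : 0 < r := Real.rpow_pos_of_pos hq0 _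
  have hr1 : r < 1 := Real.rpow_lt_one_of_one_lt_of_neg hq (by linarith)
  -- Gauss sum
  have hgauss : ∀ K : ℕ, ∑ j ∈ Finset.range K, ((j:ℝ)+1) = K*(K+1)/2 := by
    intro K
    induction K with
    | zero => simp
    | succ n ih => rw [Finset.sum_range_succ, ih]; push_cast; ring
  -- tail term bound
  have hterm : ∀ K t : ℕ, ‖μ (t+(K+1)) * (P K).eval ((q:ℂ)^(t+(K+1)))‖
      ≤ (C * r ^ (K+1)) * r ^ t := by
    intro K t
    set i := t + (K+1) with hi
    have hevbd : ‖(P K).eval ((q:ℂ)^i)‖ ≤ q ^ ((K:ℝ) * i - (K:ℝ)*((K:ℝ)+1)/2) := by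
      rw [heval, norm_prod]
      have hfac : ∀ j ∈ Finset.range K, ‖1 - (v j : ℂ) * ((q:ℂ)^i)‖ ≤ q ^ ((i:ℝ) - ((j:ℝ)+1)) := by
        intro j hj
        have hx : v j * q ^ ((i:ℝ)) = q ^ ((i:ℝ) - ((j:ℝ)+1)) := by
          rw [hv]
          show q ^ (-((j:ℝ)+1)) * q ^ ((i:ℝ)) = _
          rw [← Real.rpow_add hq0]; ring_nf
        have hx1 : (1:ℝ) ≤ q ^ ((i:ℝ) - ((j:ℝ)+1)) := by
          rw [← Real.rpow_zero q]
          apply Real.rpow_le_rpow_of_exponent_le hq.le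
          rw [Real.rpow_zero]
          have h1 := Finset.mem_range.1 hj
          have hjK : (j:ℝ) + 1 ≤ (K:ℝ) := by exact_mod_cast h1
          have hiK : ((K:ℝ)+1) ≤ (i:ℝ) := by
            rw [hi]; push_cast; linarith [Nat.cast_nonneg (α := ℝ) t]
          linarith
        have hre : (1 : ℂ) - (v j : ℂ) * ((q:ℂ)^i) = (((1 - v j * q ^ ((i:ℝ))) : ℝ) : ℂ) := by
          rw [hqi]; push_cast; ring
        rw [hre, Complex.norm_real, Real.norm_eq_abs, hx, abs_of_nonpos (by linarith)]
        linarith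
      calc ∏ j ∈ Finset.range K, ‖1 - (v j : ℂ) * ((q:ℂ)^i)‖
          ≤ ∏ j ∈ Finset.range K, q ^ ((i:ℝ) - ((j:ℝ)+1)) :=
            Finset.prod_le_prod (fun j _ => norm_nonneg _) hfac
        _ = q ^ (∑ j ∈ Finset.range K, ((i:ℝ) - ((j:ℝ)+1))) :=
            (Real.rpow_sum_of_pos hq0 _ _).symm
        _ = q ^ ((K:ℝ) * i - (K:ℝ)*((K:ℝ)+1)/2) := by
            congr 1
            rw [Finset.sum_sub_distrib, Finset.sum_const, Finset.card_range, hgauss]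
            push_cast; ring
    have hmu : ‖μ i‖ ≤ C * q ^ (-(((i:ℝ)^2 + m * i)/2)) := hb i
    have hcomb : ‖μ i * (P K).eval ((q:ℂ)^i)‖
        ≤ C * q ^ (-(((i:ℝ)^2 + m * i)/2) + ((K:ℝ) * i - (K:ℝ)*((K:ℝ)+1)/2)) := by
      rw [norm_mul, Real.rpow_add hq0, ← mul_assoc]
      exact mul_le_mul hmu hevbd (norm_nonneg _) (by positivity)
    have hexp : -(((i:ℝ)^2 + m * i)/2) + ((K:ℝ) * i - (K:ℝ)*((K:ℝ)+1)/2)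
        ≤ (-(m+1)/2) * ((K:ℝ)+1) + (-(m+1)/2) * (t:ℝ) := by
      have hi' : (i:ℝ) = (t:ℝ) + (K:ℝ) + 1 := by rw [hi]; push_cast; ring
      rw [hi']
      nlinarith [Nat.cast_nonneg (α := ℝ) t, sq_nonneg ((t:ℝ))]
    have hstep : q ^ (-(((i:ℝ)^2 + m * i)/2) + ((K:ℝ) * i - (K:ℝ)*((K:ℝ)+1)/2))
        ≤ r ^ (K+1) * r ^ t := by
      have h1 : q ^ ((-(m+1)/2) * ((K:ℝ)+1) + (-(m+1)/2) * (t:ℝ)) = r ^ (K+1) * r ^ t := by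
        rw [Real.rpow_add hq0, hrdef]
        rw [Real.rpow_mul hq0.le (-(m+1)/2), Real.rpow_mul hq0.le (-(m+1)/2)]
        congr 1
        · rw [show ((K:ℝ)+1) = ((K+1 : ℕ) : ℝ) by push_cast; ring, Real.rpow_natCast]
        · rw [Real.rpow_natCast]
      rw [← h1]
      exact Real.rpow_le_rpow_of_exponent_le hq.le hexp
    calc ‖μ i * (P K).eval ((q:ℂ)^i)‖
        ≤ C * (r ^ (K+1) * r ^ t) := le_trans hcomb (mul_le_mul_of_nonneg_left hstep hC)
      _ = (C * r ^ (K+1)) * r ^ t := by ring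
  -- main inequality
  have hmain : ∀ K : ℕ, ‖μ 0‖ * ∏ j ∈ Finset.range K, (1 - v j)
      ≤ (C * (1-r)⁻¹) * r ^ K := by
    intro K
    have hsplit := Summable.sum_add_tsum_nat_add (f := fun i => μ i * (P K).eval ((q:ℂ)^i)) (K+1) (hgsumm K)
    rw [stepA K] at hsplit
    have hhead : ∑ i ∈ Finset.range (K+1), μ i * (P K).eval ((q:ℂ)^i) = μ 0 * (P K).eval 1 := by
      rw [Finset.sum_eq_single 0]
      · norm_num
      · intro i hi h0
        rw [heval0 K i (Nat.one_le_iff_ne_zero.2 h0) (by have := Finset.mem_range.1 hi; omega)]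
        ring
      · intro h; exact absurd (Finset.mem_range.2 (by omega)) h
    rw [hhead] at hsplit
    have heq : μ 0 * (P K).eval 1 = - ∑' t : ℕ, μ (t+(K+1)) * (P K).eval ((q:ℂ)^(t+(K+1))) := by
      linear_combination hsplit
    have hbd : ‖∑' t : ℕ, μ (t+(K+1)) * (P K).eval ((q:ℂ)^(t+(K+1)))‖
        ≤ (C * r ^ (K+1)) * (1-r)⁻¹ :=
      tsum_of_norm_bounded ((hasSum_geometric_of_lt_one hr0.le hr1).mul_left _) (hterm K)
    have hPK : ‖(P K).eval 1‖ = ∏ j ∈ Finset.range K, (1 - v j) := by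
      rw [heval]
      have hcast : ∏ j ∈ Finset.range K, (1 - (v j : ℂ) * 1)
          = (((∏ j ∈ Finset.range K, (1 - v j)) : ℝ) : ℂ) := by
        rw [Complex.ofReal_prod]
        exact Finset.prod_congr rfl (fun j _ => by push_cast; ring)
      rw [hcast, Complex.norm_real, Real.norm_eq_abs,
        abs_of_nonneg (Finset.prod_nonneg (fun j _ => by linarith [hv1 j]))]
    calc ‖μ 0‖ * ∏ j ∈ Finset.range K, (1 - v j) = ‖μ 0 * (P K).eval 1‖ := by
          rw [norm_mul, hPK]
      _ ≤ (C * r ^ (K+1)) * (1-r)⁻¹ := by rw [heq, norm_neg]; exact hbd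
      _ ≤ (C * (1-r)⁻¹) * r ^ K := by
          have hrr : r ^ (K+1) = r * r ^ K := by ring
          rw [hrr]
          have h1r : (0:ℝ) < (1-r)⁻¹ := inv_pos.2 (by linarith)
          nlinarith [pow_nonneg hr0.le K, hr1, hr0, hC,
            mul_nonneg (mul_nonneg hC (pow_nonneg hr0.le K)) h1r.le]
    -- choose J with small geometric tail
  have hqinv0 : (0:ℝ) < q⁻¹ := by positivity
  have hqinv1 : q⁻¹ < 1 := by
    rw [inv_lt_one_iff₀]; right; exact hq
  have h1qi : (0:ℝ) < 1 - q⁻¹ := by linarith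
  have hvgeo : ∀ j : ℕ, v j = (q⁻¹) ^ (j+1) := by
    intro j
    rw [hv]
    show q ^ (-((j:ℝ)+1)) = _
    rw [show -((j:ℝ)+1) = -(((j+1 : ℕ)):ℝ) by push_cast; ring, Real.rpow_neg hq0.le,
      Real.rpow_natCast, ← inv_pow]
  obtain ⟨J, hJ⟩ := exists_pow_lt_of_lt_one (show (0:ℝ) < (1/2) * (1 - q⁻¹) by positivity) hqinv1
  set PJ : ℝ := ∏ j ∈ Finset.range J, (1 - v j) with hPJdef
  have hPJ0 : 0 < PJ := Finset.prod_pos (fun j _ => by linarith [hv1 j])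
  -- tail products are at least 1/2
  have htail : ∀ K : ℕ, J ≤ K → (1:ℝ)/2 ≤ ∏ j ∈ Finset.Ico J K, (1 - v j) := by
    intro K hJK
    have hsumbd : ∑ j ∈ Finset.Ico J K, v j ≤ 1/2 := by
      rw [Finset.sum_Ico_eq_sum_range]
      have hco : ∀ t ∈ Finset.range (K-J), v (J+t) = (q⁻¹)^(J+1) * (q⁻¹)^t := by
        intro t _
        rw [hvgeo, ← pow_add]
        congr 1
        omega
      calc ∑ t ∈ Finset.range (K-J), v (J+t)
          = ∑ t ∈ Finset.range (K-J), (q⁻¹)^(J+1) * (q⁻¹)^t := Finset.sum_congr rfl hco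
        _ = (q⁻¹)^(J+1) * ∑ t ∈ Finset.range (K-J), (q⁻¹)^t := by rw [Finset.mul_sum]
        _ ≤ (q⁻¹)^(J+1) * (1-q⁻¹)⁻¹ := by
            apply mul_le_mul_of_nonneg_left _ (pow_nonneg hqinv0.le _)
            calc ∑ t ∈ Finset.range (K-J), (q⁻¹)^t
                ≤ ∑' t : ℕ, (q⁻¹)^t :=
                  Summable.sum_le_tsum _ (fun t _ => pow_nonneg hqinv0.le _)
                    (summable_geometric_of_lt_one hqinv0.le hqinv1)
              _ = (1-q⁻¹)⁻¹ := tsum_geometric_of_lt_one hqinv0.le hqinv1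
        _ ≤ 1/2 := by
            have h2 : (q⁻¹)^(J+1) ≤ (q⁻¹)^J := by
              apply pow_le_pow_of_le_one hqinv0.le hqinv1.le
              omega
            have h3 : (q⁻¹)^J * (1-q⁻¹)⁻¹ ≤ 1/2 := by
              rw [← div_eq_mul_inv, div_le_iff₀ h1qi]
              nlinarith [hJ]
            nlinarith [inv_pos.2 h1qi]
    have hprodbd := prod_one_sub_ge (K-J) (fun t => v (J+t)) (fun t => (hv0 _).le)
      (fun t => (hv1 _).le)
    rw [Finset.prod_Ico_eq_prod_range]
    calc (1:ℝ)/2 = 1 - 1/2 := by norm_num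
      _ ≤ 1 - ∑ t ∈ Finset.range (K-J), v (J+t) := by
          rw [← Finset.sum_Ico_eq_sum_range]; linarith
      _ ≤ _ := hprodbd
  -- combine
  have hfin : ∀ K : ℕ, J ≤ K → ‖μ 0‖ * (PJ * (1/2)) ≤ (C * (1-r)⁻¹) * r ^ K := by
    intro K hJK
    have hsplitP : ∏ j ∈ Finset.range K, (1 - v j)
        = PJ * ∏ j ∈ Finset.Ico J K, (1 - v j) := by
      rw [hPJdef]
      simp only [Finset.range_eq_Ico]
      exact (Finset.prod_Ico_consecutive _ (Nat.zero_le J) hJK).symm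
    have h1 : PJ * (1/2) ≤ ∏ j ∈ Finset.range K, (1 - v j) := by
      rw [hsplitP]
      exact mul_le_mul_of_nonneg_left (htail K hJK) hPJ0.le
    calc ‖μ 0‖ * (PJ * (1/2)) ≤ ‖μ 0‖ * ∏ j ∈ Finset.range K, (1 - v j) :=
          mul_le_mul_of_nonneg_left h1 (norm_nonneg _)
      _ ≤ (C * (1-r)⁻¹) * r ^ K := hmain K
  have hlim : Filter.Tendsto (fun K : ℕ => (C * (1-r)⁻¹) * r ^ K) Filter.atTop (nhds 0) := by
    have := (tendsto_pow_atTop_nhds_zero_of_lt_one hr0.le hr1).const_mul (C * (1-r)⁻¹)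
    simpa using this
  have hc : ‖μ 0‖ * (PJ * (1/2)) ≤ 0 :=
    ge_of_tendsto hlim (Filter.eventually_atTop.2 ⟨J, fun K hK => hfin K hK⟩)
  have : ‖μ 0‖ ≤ 0 := by nlinarith [norm_nonneg (μ 0)]
  exact norm_le_zero_iff.1 this

/-- vanishing lemma. If `Σ_i |μ_i|²·q^{i²+mi} < ∞` and the entire function
`f(z) = Σ_i μ_i z^i` vanishes at every point `q^k`, `k ∈ ℕ`, then `μ = 0`. -/
theorem stmt7 (q m : ℝ) (hq : 1 < q) (hm : -1 < m) (μ : ℕ → ℂ)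
    (hsum : Summable fun i : ℕ => ‖μ i‖ ^ 2 * q ^ ((i : ℝ) ^ 2 + m * (i : ℝ)))
    (hzero : ∀ k : ℕ, ∑' i : ℕ, μ i * ((q : ℂ) ^ k) ^ i = 0) :
    ∀ i : ℕ, μ i = 0 := by
  have hq0 : (0:ℝ) < q := lt_trans one_pos hq
  set C : ℝ := Real.sqrt (∑' i : ℕ, ‖μ i‖ ^ 2 * q ^ ((i : ℝ) ^ 2 + m * (i : ℝ)))
    with hCdef
  have hC0 : 0 ≤ C := Real.sqrt_nonneg _
  have hbC : ∀ i : ℕ, ‖μ i‖ ≤ C * q ^ (-(((i:ℝ)^2 + m * i)/2)) := by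
    intro i
    have htn : 0 ≤ ∑' i : ℕ, ‖μ i‖ ^ 2 * q ^ ((i : ℝ) ^ 2 + m * (i : ℝ)) :=
      tsum_nonneg (fun j => by positivity)
    have h1 : ‖μ i‖ ^ 2 * q ^ ((i : ℝ) ^ 2 + m * (i : ℝ)) ≤ C ^ 2 := by
      rw [hCdef, Real.sq_sqrt htn]
      exact Summable.le_tsum hsum i (fun j _ => by positivity)
    have hqE : (0:ℝ) < q ^ ((i : ℝ) ^ 2 + m * (i : ℝ)) := Real.rpow_pos_of_pos hq0 _
    have h2 : ‖μ i‖ ^ 2 ≤ C ^ 2 * (q ^ ((i : ℝ) ^ 2 + m * (i : ℝ)))⁻¹ := by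
      rw [← div_eq_mul_inv, le_div_iff₀ hqE]
      exact h1
    have h3 : (C * q ^ (-(((i:ℝ)^2 + m * i)/2))) ^ 2
        = C ^ 2 * (q ^ ((i : ℝ) ^ 2 + m * (i : ℝ)))⁻¹ := by
      rw [mul_pow, sq (q ^ (-(((i:ℝ)^2 + m * i)/2))), ← Real.rpow_add hq0,
        ← Real.rpow_neg hq0.le]
      congr 1
      ring
    have h4 := Real.sqrt_le_sqrt (h2.trans_eq h3.symm)
    rwa [Real.sqrt_sq (norm_nonneg _), Real.sqrt_sq (by positivity)] at h4
  intro i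
  induction i using Nat.strong_induction_on with
  | _ n ih =>
    have hm' : (-1:ℝ) < m + 2*(n:ℝ) := by
      have := Nat.cast_nonneg (α := ℝ) n; linarith
    have hb' : ∀ j : ℕ, ‖μ (j+n)‖
        ≤ (C * q ^ (-(((n:ℝ)^2 + m*(n:ℝ))/2))) * q ^ (-(((j:ℝ)^2 + (m + 2*(n:ℝ)) * (j:ℝ))/2)) := by
      intro j
      have h := hbC (j+n)
      have hcast : ((j+n:ℕ):ℝ) = (j:ℝ)+(n:ℝ) := by push_cast; ring
      rw [hcast] at h
      calc ‖μ (j+n)‖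
          ≤ C * q ^ (-((((j:ℝ)+(n:ℝ))^2 + m * ((j:ℝ)+(n:ℝ)))/2)) := h
        _ = (C * q ^ (-(((n:ℝ)^2 + m*(n:ℝ))/2))) * q ^ (-(((j:ℝ)^2 + (m + 2*(n:ℝ)) * (j:ℝ))/2)) := by
            rw [mul_assoc, ← Real.rpow_add hq0]
            congr 2
            ring
    have hz' : ∀ k : ℕ, ∑' j : ℕ, μ (j+n) * ((q:ℂ)^k)^j = 0 := by
      intro k
      have hs := summ q m hq μ C hbC k
      have hsplit := Summable.sum_add_tsum_nat_add (f := fun i => μ i * ((q:ℂ)^k)^i) n hs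
      rw [hzero k] at hsplit
      have hhead : ∑ j ∈ Finset.range n, μ j * ((q:ℂ)^k)^j = 0 :=
        Finset.sum_eq_zero (fun j hj => by rw [ih j (Finset.mem_range.1 hj)]; ring)
      have htail : ∑' j : ℕ, μ (j+n) * ((q:ℂ)^k)^(j+n) = 0 := by
        rw [hhead] at hsplit
        simpa using hsplit
      have hfac : ∀ j : ℕ, μ (j+n) * ((q:ℂ)^k)^(j+n)
          = ((q:ℂ)^k)^n * (μ (j+n) * ((q:ℂ)^k)^j) := by
        intro j; rw [pow_add]; ring
      rw [tsum_congr hfac, tsum_mul_left] at htail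
      have hne : ((q:ℂ)^k)^n ≠ 0 := by
        apply pow_ne_zero; apply pow_ne_zero
        simp only [ne_eq, Complex.ofReal_eq_zero]
        exact ne_of_gt hq0
      exact (mul_eq_zero.1 htail).resolve_left hne
    have := key q (m + 2*(n:ℝ)) hq hm' (fun j => μ (j+n))
      (C * q ^ (-(((n:ℝ)^2 + m*(n:ℝ))/2))) (by positivity) hb' hz'
    simpa using this
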